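/- Let Ψ be an Orlicz function and a ∈ 𝔻 = {z ∈ ℂ : |z| < 1}. Let D(a) = sup{ |f(a)| : f holomorphic on 𝔻 with ∫_𝔻 Ψ(|f|) d𝒜 ≤ 1 } (the norm of the evaluation functional at a on the unit ball of the Bergman–Orlicz space ℬ^Ψ). Then (1/16)·Ψ⁻¹( 1/(1−|a|)² ) ≤ D(a) ≤ 8·Ψ⁻¹( 1/(1−|a|)² ). -/

import Mathlib

open MeasureTheory
open Real Set
open scoped ENNReal
set_option maxHeartbeats 1600000

/-- The normalized area measure `𝒜` on the open unit disk `𝔻 ⊆ ℂ`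
(planar Lebesgue measure divided by `π`). -/
noncomputable def bergmanMeasure : Measure ℂ :=
  (ENNReal.ofReal Real.pi)⁻¹ • (volume.restrict (Metric.ball (0 : ℂ) 1))

/-- The norm of the evaluation functional at `a` on the unit ball of the
Bergman–Orlicz space `ℬ^Ψ`. -/
noncomputable def bergmanEvalNorm (Ψ : ℝ → ℝ) (a : ℂ) : ℝ :=
  sSup {x : ℝ | ∃ f : ℂ → ℂ, DifferentiableOn ℂ f (Metric.ball 0 1) ∧
    (∫⁻ z, ENNReal.ofReal (Ψ (‖f z‖)) ∂bergmanMeasure) ≤ 1 ∧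
    x = ‖f a‖}


section PsiLemmas
variable {Ψ Ψinv : ℝ → ℝ}

lemma psi_nonneg (hΨ0 : Ψ 0 = 0) (hΨmono : StrictMonoOn Ψ (Set.Ici 0)) :
    ∀ x, 0 ≤ x → 0 ≤ Ψ x := by
  intro x hx
  have := hΨmono.monotoneOn (Set.self_mem_Ici) hx hx
  simpa [hΨ0] using this

lemma psi_sublinear (hΨ0 : Ψ 0 = 0) (hΨconv : StrictConvexOn ℝ (Set.Ici 0) Ψ) :
    ∀ s x, 0 ≤ s → s ≤ 1 → 0 ≤ x → Ψ (s * x) ≤ s * Ψ x := by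
  intro s x hs hs1 hx
  have h := hΨconv.convexOn.2 (Set.mem_Ici.2 hx) (Set.self_mem_Ici (a := (0:ℝ)))
    hs (by linarith : (0:ℝ) ≤ 1 - s) (by ring)
  simpa [hΨ0] using h

lemma psi_superlinear (hΨ0 : Ψ 0 = 0) (hΨconv : StrictConvexOn ℝ (Set.Ici 0) Ψ) :
    ∀ k x, 1 ≤ k → 0 ≤ x → k * Ψ x ≤ Ψ (k * x) := by
  intro k x hk hx
  have hk0 : 0 < k := lt_of_lt_of_le one_pos hk
  have h := psi_sublinear hΨ0 hΨconv k⁻¹ (k * x) (by positivity)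
    (by rw [inv_le_one_iff₀]; right; exact hk) (by positivity)
  rw [inv_mul_cancel_left₀ hk0.ne'] at h
  calc k * Ψ x ≤ k * (k⁻¹ * Ψ (k * x)) := by
        exact mul_le_mul_of_nonneg_left h hk0.le
    _ = Ψ (k * x) := by field_simp

lemma psiinv_mono (hΨmono : StrictMonoOn Ψ (Set.Ici 0))
    (hΨinv2 : ∀ y, 0 ≤ y → Ψ (Ψinv y) = y) (hΨinv0 : ∀ y, 0 ≤ y → 0 ≤ Ψinv y) :
    ∀ y₁ y₂, 0 ≤ y₁ → y₁ ≤ y₂ → Ψinv y₁ ≤ Ψinv y₂ := by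
  intro y₁ y₂ h1 h12
  by_contra h
  push_neg at h
  have := hΨmono (Set.mem_Ici.2 (hΨinv0 y₂ (h1.trans h12))) (Set.mem_Ici.2 (hΨinv0 y₁ h1)) h
  rw [hΨinv2 y₁ h1, hΨinv2 y₂ (h1.trans h12)] at this
  linarith

lemma psiinv_scale (hΨ0 : Ψ 0 = 0) (hΨmono : StrictMonoOn Ψ (Set.Ici 0))
    (hΨconv : StrictConvexOn ℝ (Set.Ici 0) Ψ)
    (hΨinv1 : ∀ x, 0 ≤ x → Ψinv (Ψ x) = x)
    (hΨinv2 : ∀ y, 0 ≤ y → Ψ (Ψinv y) = y) (hΨinv0 : ∀ y, 0 ≤ y → 0 ≤ Ψinv y) :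
    ∀ k y, 1 ≤ k → 0 ≤ y → Ψinv (k * y) ≤ k * Ψinv y := by
  intro k y hk hy
  have hky : 0 ≤ k * y := by positivity
  have hx0 : 0 ≤ Ψinv y := hΨinv0 y hy
  have h1 : k * y ≤ Ψ (k * Ψinv y) := by
    have := psi_superlinear hΨ0 hΨconv k (Ψinv y) hk hx0
    rw [hΨinv2 y hy] at this; exact this
  have h2 : Ψinv (k * y) ≤ Ψinv (Ψ (k * Ψinv y)) :=
    psiinv_mono hΨmono hΨinv2 hΨinv0 _ _ hky h1
  rwa [hΨinv1 _ (by positivity)] at h2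

end PsiLemmas

lemma lintegral_one_add_sq_inv : ∫⁻ y : ℝ, ENNReal.ofReal ((1 + y^2)⁻¹) = ENNReal.ofReal π := by
  rw [← integral_univ_inv_one_add_sq,
    ofReal_integral_eq_lintegral_ofReal integrable_inv_one_add_sq
      (Filter.Eventually.of_forall (fun y => by positivity))]

lemma yint (s t : ℝ) (hs : 0 < s) (ht : 0 < t) :
    ∫⁻ y : ℝ, ENNReal.ofReal ((s^2 + t^2*y^2)⁻¹) = ENNReal.ofReal (π/(t*s)) := by
  have hm : (t/s) ≠ 0 := by positivity
  have key : ∀ y : ℝ, ENNReal.ofReal ((s^2 + t^2*y^2)⁻¹)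
      = ENNReal.ofReal (s⁻¹^2) * ENNReal.ofReal ((1 + ((t/s)*y)^2)⁻¹) := by
    intro y
    rw [← ENNReal.ofReal_mul (by positivity)]
    congr 1
    field_simp
  simp_rw [key]
  rw [lintegral_const_mul' _ _ ENNReal.ofReal_ne_top]
  have hmap : ∫⁻ y : ℝ, ENNReal.ofReal ((1 + ((t/s)*y)^2)⁻¹)
      = ENNReal.ofReal |(t/s)⁻¹| * ENNReal.ofReal π := by
    have h1 : ∫⁻ y : ℝ, ENNReal.ofReal ((1 + ((t/s)*y)^2)⁻¹)
        = ∫⁻ z : ℝ, ENNReal.ofReal ((1 + z^2)⁻¹) ∂(Measure.map (fun y => (t/s)*y) volume) := by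
      rw [lintegral_map (by fun_prop) (by fun_prop)]
    rw [h1, Real.map_volume_mul_left hm, lintegral_smul_measure, lintegral_one_add_sq_inv, smul_eq_mul]
  rw [hmap, ← ENNReal.ofReal_mul (by positivity), ← ENNReal.ofReal_mul (by positivity)]
  congr 1
  rw [abs_of_pos (by positivity)]
  field_simp

lemma xint {t : ℝ} (ht : 0 < t) (ht1 : t < 1) :
    ∫⁻ x in Set.Ioo (-1:ℝ) 1, ENNReal.ofReal (((1-t*x)^2)⁻¹) = ENNReal.ofReal (2/(1-t^2)) := by
  have hpos : ∀ x ∈ Set.Icc (-1:ℝ) 1, 0 < 1 - t*x := by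
    intro x hx
    nlinarith [hx.1, hx.2]
  have hcont : ContinuousOn (fun x : ℝ => ((1-t*x)^2)⁻¹) (Set.Icc (-1) 1) := by
    apply ContinuousOn.inv₀
    · fun_prop
    · intro x hx; have := hpos x hx; positivity
  have hint : IntegrableOn (fun x : ℝ => ((1-t*x)^2)⁻¹) (Set.Ioo (-1) 1) volume :=
    (hcont.integrableOn_compact isCompact_Icc).mono_set Set.Ioo_subset_Icc_self
  rw [← ofReal_integral_eq_lintegral_ofReal hint]
  · congr 1
    have hderiv : ∀ x ∈ Set.uIcc (-1:ℝ) 1,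
        HasDerivAt (fun x : ℝ => t⁻¹ * (1-t*x)⁻¹) (((1-t*x)^2)⁻¹) x := by
      intro x hx
      rw [Set.uIcc_of_le (by norm_num)] at hx
      have h0 : 1 - t*x ≠ 0 := (hpos x hx).ne'
      have : HasDerivAt (fun x : ℝ => 1 - t*x) (-t) x := by
        simpa using ((hasDerivAt_id x).const_mul t).const_sub 1
      have := (this.inv h0).const_mul t⁻¹
      refine this.congr_deriv ?_
      field_simp
    have hIcalc : ∫ x in (-1:ℝ)..1, ((1-t*x)^2)⁻¹
        = t⁻¹ * (1-t*1)⁻¹ - t⁻¹ * (1-t*(-1))⁻¹ := by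
      apply intervalIntegral.integral_eq_sub_of_hasDerivAt hderiv
      rw [intervalIntegrable_iff_integrableOn_Ioo_of_le (by norm_num)]
      exact hint
    have : ∫ x in Set.Ioo (-1:ℝ) 1, ((1-t*x)^2)⁻¹
        = ∫ x in (-1:ℝ)..1, ((1-t*x)^2)⁻¹ := by
      rw [intervalIntegral.integral_of_le (by norm_num), integral_Ioc_eq_integral_Ioo]
    rw [this, hIcalc]
    have h1 : (1:ℝ) - t ≠ 0 := by linarith
    have h2 : (1:ℝ) + t ≠ 0 := by linarith
    have h3 : (1:ℝ) - t^2 ≠ 0 := by nlinarith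
    rw [mul_one, mul_neg_one, sub_neg_eq_add]
    field_simp
    ring
  · filter_upwards with x
    positivity

lemma J_bound {t : ℝ} (ht : 0 < t) (ht1 : t < 1) :
    ∫⁻ z in Metric.ball (0:ℂ) 1, ENNReal.ofReal (((‖1 - (t:ℂ)*z‖)^4)⁻¹)
      ≤ ENNReal.ofReal (2*π/(t*(1-t)*(1-t^2))) := by
  set F : ℂ → ℝ≥0∞ := fun z => ENNReal.ofReal (((‖1 - (t:ℂ)*z‖)^4)⁻¹) with hF
  have h1 : ∫⁻ z in Metric.ball (0:ℂ) 1, F z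
      = ∫⁻ p in Complex.measurableEquivRealProd.symm ⁻¹' (Metric.ball (0:ℂ) 1),
          F (Complex.measurableEquivRealProd.symm p) := by
    rw [(Complex.volume_preserving_equiv_real_prod.symm Complex.measurableEquivRealProd).setLIntegral_comp_preimage_emb
      Complex.measurableEquivRealProd.symm.measurableEmbedding F _]
  have hFval : ∀ p : ℝ × ℝ, F (Complex.measurableEquivRealProd.symm p)
      = ENNReal.ofReal ((((1-t*p.1)^2 + (t*p.2)^2)^2)⁻¹) := by
    intro p
    have hz : (Complex.measurableEquivRealProd.symm p : ℂ) = (p.1 : ℂ) + (p.2 : ℂ) * Complex.I :=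
      Complex.equivRealProd_symm_apply p
    rw [hF]
    simp only [hz]
    congr 2
    have habs : (‖1 - (t:ℂ) * ((p.1:ℂ) + (p.2:ℂ)*Complex.I)‖)^2
        = (1-t*p.1)^2 + (t*p.2)^2 := by
      rw [Complex.sq_norm, Complex.normSq_apply]
      simp [Complex.sub_re, Complex.sub_im, Complex.mul_re, Complex.mul_im]
      ring
    calc (‖1 - (t:ℂ) * ((p.1:ℂ) + (p.2:ℂ)*Complex.I)‖)^4
        = ((‖1 - (t:ℂ) * ((p.1:ℂ) + (p.2:ℂ)*Complex.I)‖)^2)^2 := by ring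
      _ = ((1-t*p.1)^2 + (t*p.2)^2)^2 := by rw [habs]
  have hsub : Complex.measurableEquivRealProd.symm ⁻¹' (Metric.ball (0:ℂ) 1)
      ⊆ (Set.Ioo (-1:ℝ) 1) ×ˢ (Set.Ioo (-1:ℝ) 1) := by
    intro p hp
    simp only [Set.mem_preimage, Metric.mem_ball, Complex.dist_eq, sub_zero] at hp
    have hz : (Complex.measurableEquivRealProd.symm p : ℂ) = (p.1 : ℂ) + (p.2 : ℂ) * Complex.I :=
      Complex.equivRealProd_symm_apply p
    rw [hz] at hp
    have h1 := Complex.abs_re_le_norm ((p.1:ℂ) + (p.2:ℂ)*Complex.I)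
    have h2 := Complex.abs_im_le_norm ((p.1:ℂ) + (p.2:ℂ)*Complex.I)
    simp only [Complex.add_re, Complex.add_im, Complex.ofReal_re, Complex.ofReal_im,
      Complex.mul_re, Complex.mul_im, Complex.I_re, Complex.I_im] at h1 h2
    norm_num at h1 h2
    constructor
    · constructor <;> [nlinarith [abs_nonneg p.1, le_abs_self p.1, neg_abs_le p.1];
        nlinarith [le_abs_self p.1]]
    · constructor <;> [nlinarith [le_abs_self p.2, neg_abs_le p.2];
        nlinarith [le_abs_self p.2]]
  calc ∫⁻ z in Metric.ball (0:ℂ) 1, F z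
      = ∫⁻ p in Complex.measurableEquivRealProd.symm ⁻¹' (Metric.ball (0:ℂ) 1),
          ENNReal.ofReal ((((1-t*p.1)^2 + (t*p.2)^2)^2)⁻¹) := by
        rw [h1]; exact lintegral_congr (fun p => by rw [hFval])
    _ ≤ ∫⁻ p in (Set.Ioo (-1:ℝ) 1) ×ˢ (Set.Ioo (-1:ℝ) 1),
          ENNReal.ofReal ((((1-t*p.1)^2 + (t*p.2)^2)^2)⁻¹) := lintegral_mono_set hsub
    _ = ∫⁻ x in Set.Ioo (-1:ℝ) 1, ∫⁻ y in Set.Ioo (-1:ℝ) 1,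
          ENNReal.ofReal ((((1-t*x)^2 + (t*y)^2)^2)⁻¹) := by
        rw [Measure.volume_eq_prod, ← Measure.prod_restrict]
        exact lintegral_prod _ (by fun_prop)
    _ ≤ ∫⁻ x in Set.Ioo (-1:ℝ) 1,
          ENNReal.ofReal (π/(t*(1-t)) * ((1-t*x)^2)⁻¹) := by
        apply setLIntegral_mono' measurableSet_Ioo
        intro x hx
        have hs : 0 < 1 - t*x := by nlinarith [hx.1, hx.2]
        have hs2 : 1 - t < 1 - t*x := by nlinarith [hx.2]
        have ht' : 0 < 1 - t := by linarith
        calc ∫⁻ y in Set.Ioo (-1:ℝ) 1, ENNReal.ofReal ((((1-t*x)^2 + (t*y)^2)^2)⁻¹)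
            ≤ ∫⁻ y in Set.Ioo (-1:ℝ) 1,
                ENNReal.ofReal (((1-t*x)^2)⁻¹ * (((1-t*x)^2 + t^2*y^2))⁻¹) := by
              apply lintegral_mono
              intro y
              apply ENNReal.ofReal_le_ofReal
              have hA : (1-t*x)^2 ≤ (1-t*x)^2 + (t*y)^2 := by nlinarith [sq_nonneg (t*y)]
              have hA0 : 0 < (1-t*x)^2 := by positivity
              have h2 : ((1-t*x)^2 + (t*y)^2)⁻¹ ≤ ((1-t*x)^2)⁻¹ := by
                apply inv_anti₀ hA0 hA
              have hB0 : 0 < (1-t*x)^2 + (t*y)^2 := by positivity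
              calc (((1-t*x)^2 + (t*y)^2)^2)⁻¹
                  = ((1-t*x)^2 + (t*y)^2)⁻¹ * ((1-t*x)^2 + (t*y)^2)⁻¹ := by
                    rw [← mul_inv]; ring_nf
                _ ≤ ((1-t*x)^2)⁻¹ * ((1-t*x)^2 + (t*y)^2)⁻¹ := by
                    apply mul_le_mul_of_nonneg_right h2 (by positivity)
                _ = ((1-t*x)^2)⁻¹ * (((1-t*x)^2 + t^2*y^2))⁻¹ := by ring_nf
          _ = ENNReal.ofReal (((1-t*x)^2)⁻¹) * ∫⁻ y in Set.Ioo (-1:ℝ) 1,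
                ENNReal.ofReal ((((1-t*x)^2 + t^2*y^2))⁻¹) := by
              rw [← lintegral_const_mul' _ _ ENNReal.ofReal_ne_top]
              exact lintegral_congr (fun y => by rw [← ENNReal.ofReal_mul (by positivity)])
          _ ≤ ENNReal.ofReal (((1-t*x)^2)⁻¹) * ∫⁻ y : ℝ,
                ENNReal.ofReal ((((1-t*x)^2 + t^2*y^2))⁻¹) := by
              apply mul_le_mul_right
              exact (lintegral_mono_set (Set.subset_univ _)).trans_eq
                (by rw [Measure.restrict_univ])
          _ = ENNReal.ofReal (((1-t*x)^2)⁻¹) * ENNReal.ofReal (π/(t*(1-t*x))) := by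
              rw [yint (1-t*x) t hs ht]
          _ ≤ ENNReal.ofReal (π/(t*(1-t)) * ((1-t*x)^2)⁻¹) := by
              rw [← ENNReal.ofReal_mul (by positivity)]
              apply ENNReal.ofReal_le_ofReal
              have h : π/(t*(1-t*x)) ≤ π/(t*(1-t)) :=
                div_le_div_of_nonneg_left pi_pos.le (by positivity) (by nlinarith)
              calc ((1-t*x)^2)⁻¹ * (π/(t*(1-t*x)))
                  ≤ ((1-t*x)^2)⁻¹ * (π/(t*(1-t))) :=
                    mul_le_mul_of_nonneg_left h (by positivity)
                _ = π/(t*(1-t)) * ((1-t*x)^2)⁻¹ := mul_comm _ _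
    _ = ENNReal.ofReal (π/(t*(1-t))) * ∫⁻ x in Set.Ioo (-1:ℝ) 1,
          ENNReal.ofReal (((1-t*x)^2)⁻¹) := by
        have ht' : (0:ℝ) < 1 - t := by linarith
        rw [← lintegral_const_mul' _ _ ENNReal.ofReal_ne_top]
        apply lintegral_congr
        intro x
        rw [← ENNReal.ofReal_mul (by positivity)]
    _ = ENNReal.ofReal (π/(t*(1-t))) * ENNReal.ofReal (2/(1-t^2)) := by rw [xint ht ht1]
    _ = ENNReal.ofReal (2*π/(t*(1-t)*(1-t^2))) := by
        have ht' : (0:ℝ) < 1 - t := by linarith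
        rw [← ENNReal.ofReal_mul (by positivity)]
        congr 1
        have h3 : (0:ℝ) < 1 - t^2 := by nlinarith
        field_simp

lemma rot_int {a : ℂ} (ha0 : a ≠ 0) :
    ∫⁻ z in Metric.ball (0:ℂ) 1,
        ENNReal.ofReal (((‖1 - (starRingEnd ℂ a) * z‖)^4)⁻¹)
      = ∫⁻ z in Metric.ball (0:ℂ) 1,
        ENNReal.ofReal (((‖1 - ((‖a‖ : ℝ):ℂ) * z‖)^4)⁻¹) := by
  set t : ℝ := ‖a‖ with htdef
  have ht : 0 < t := norm_pos_iff.mpr ha0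
  have htC : ((t:ℝ):ℂ) ≠ 0 := by
    simp only [ne_eq, Complex.ofReal_eq_zero]; exact ht.ne'
  set u : Circle := ⟨((t:ℝ):ℂ)⁻¹ * a, by
    apply mem_sphere_zero_iff_norm.2
    rw [norm_mul, norm_inv, Complex.norm_real, Real.norm_eq_abs,
      abs_of_pos ht]
    field_simp; exact htdef.symm⟩ with hu
  set e : ℂ ≃ₗᵢ[ℝ] ℂ := rotation u with he
  have hmp : MeasurePreserving ⇑e volume volume := e.measurePreserving
  have hemb : MeasurableEmbedding ⇑e := e.toHomeomorph.measurableEmbedding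
  set G : ℂ → ℝ≥0∞ := fun w => ENNReal.ofReal (((‖1 - (starRingEnd ℂ a) * w‖)^4)⁻¹)
    with hG
  have hpre : ⇑e ⁻¹' (Metric.ball (0:ℂ) 1) = Metric.ball (0:ℂ) 1 := by
    ext z
    simp only [Set.mem_preimage, Metric.mem_ball, Complex.dist_eq, sub_zero, he, rotation_apply]
    have : ‖(u:ℂ) * z‖ = ‖z‖ := by
      rw [norm_mul, Circle.norm_coe, one_mul]
    rw [this]
  have hmul : ∀ z : ℂ, (starRingEnd ℂ a) * (e z) = ((t:ℝ):ℂ) * z := by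
    intro z
    have h1 : e z = (u:ℂ) * z := rfl
    have hcoe : (u : ℂ) = ((t:ℝ):ℂ)⁻¹ * a := rfl
    have hconj : (starRingEnd ℂ a) * a = ((t:ℝ):ℂ)^2 := by
      rw [mul_comm, Complex.mul_conj, Complex.normSq_eq_norm_sq, ← htdef]
      push_cast; ring
    rw [h1, hcoe]
    field_simp
    linear_combination z * hconj
  have hGe : ∀ z : ℂ, G (e z)
      = ENNReal.ofReal (((‖1 - ((t:ℝ):ℂ) * z‖)^4)⁻¹) := by
    intro z
    rw [hG]
    simp only
    rw [hmul z]
  have key := hmp.setLIntegral_comp_preimage_emb hemb G (Metric.ball (0:ℂ) 1)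
  rw [hpre] at key
  exact key.symm.trans (lintegral_congr hGe)

lemma ofReal_pi_ne_zero : ENNReal.ofReal π ≠ 0 := by
  simp [ENNReal.ofReal_eq_zero, pi_pos, not_le]

lemma le_one_of_le_pi {X : ℝ≥0∞} (h : X ≤ ENNReal.ofReal π) :
    (ENNReal.ofReal π)⁻¹ * X ≤ 1 := by
  calc (ENNReal.ofReal π)⁻¹ * X ≤ (ENNReal.ofReal π)⁻¹ * ENNReal.ofReal π :=
        mul_le_mul_right h _
    _ = 1 := ENNReal.inv_mul_cancel ofReal_pi_ne_zero ENNReal.ofReal_ne_top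

theorem lower_witness
    (Ψ Ψinv : ℝ → ℝ)
    (hΨ0 : Ψ 0 = 0)
    (hΨmono : StrictMonoOn Ψ (Set.Ici 0))
    (hΨconv : StrictConvexOn ℝ (Set.Ici 0) Ψ)
    (hΨinv2 : ∀ y, 0 ≤ y → Ψ (Ψinv y) = y)
    (hΨinv0 : ∀ y, 0 ≤ y → 0 ≤ Ψinv y)
    (a : ℂ) (ha : ‖a‖ < 1) :
    ∃ f : ℂ → ℂ, DifferentiableOn ℂ f (Metric.ball 0 1) ∧
    (∫⁻ z, ENNReal.ofReal (Ψ (‖f z‖)) ∂bergmanMeasure) ≤ 1 ∧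
    (1 / 16) * Ψinv (1 / (1 - ‖a‖) ^ 2) = ‖f a‖ := by
  set t : ℝ := ‖a‖ with htdef
  have ht0 : 0 ≤ t := norm_nonneg a
  have hr : 0 < 1 - t := by linarith
  set c : ℝ := Ψinv (1 / (1 - t) ^ 2) with hcdef
  clear_value t
  have hy0 : (0:ℝ) < 1 / (1 - t)^2 := by positivity
  clear_value c
  have hc0 : 0 ≤ c := by rw [hcdef]; exact hΨinv0 _ hy0.le
  have hΨc : Ψ c = 1 / (1 - t)^2 := by rw [hcdef]; exact hΨinv2 _ hy0.le
  have hcpos : 0 < c := by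
    rcases hc0.lt_or_eq with h | h
    · exact h
    · exfalso; rw [← h, hΨ0] at hΨc; linarith
  have ht2 : 0 < 1 - t^2 := by nlinarith
  -- the witness function
  set F : ℂ → ℂ := fun z =>
    ((c/16 : ℝ) : ℂ) * (((1 - t^2 : ℝ) : ℂ) * (1 - (starRingEnd ℂ a) * z)⁻¹)^4 with hFdef
  have hden : ∀ z ∈ Metric.ball (0:ℂ) 1, (1 - (starRingEnd ℂ a) * z) ≠ 0 := by
    intro z hz h0
    have h1 : (starRingEnd ℂ a) * z = 1 := by
      have := sub_eq_zero.1 h0; exact this.symm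
    have : ‖(starRingEnd ℂ a) * z‖ = 1 := by rw [h1]; simp
    rw [norm_mul, Complex.norm_conj, ← htdef] at this
    have hz' : ‖z‖ < 1 := by
      simpa [Complex.dist_eq] using Metric.mem_ball.1 hz
    nlinarith [norm_nonneg z]
  have hdiff : DifferentiableOn ℂ F (Metric.ball 0 1) := by
    apply DifferentiableOn.const_mul
    apply DifferentiableOn.pow
    apply DifferentiableOn.const_mul
    apply DifferentiableOn.inv
    · apply DifferentiableOn.const_sub
      exact (differentiable_id.const_mul _).differentiableOn
    · exact hden
  -- |F z|
  have habs : ∀ z : ℂ, ‖F z‖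
      = (c/16) * ((1 - t^2) * (‖1 - (starRingEnd ℂ a) * z‖)⁻¹)^4 := by
    intro z
    rw [hFdef]
    simp only [norm_mul, norm_pow, norm_inv, Complex.norm_real, Real.norm_eq_abs]
    rw [abs_of_nonneg (by positivity : (0:ℝ) ≤ c/16), abs_of_nonneg ht2.le]
  have hablb : ∀ z ∈ Metric.ball (0:ℂ) 1,
      1 - t ≤ ‖1 - (starRingEnd ℂ a) * z‖ := by
    intro z hz
    have hz' : ‖z‖ < 1 := by
      simpa [Complex.dist_eq] using Metric.mem_ball.1 hz
    have h1 : ‖(starRingEnd ℂ a) * z‖ ≤ t := by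
      rw [norm_mul, Complex.norm_conj, ← htdef]
      nlinarith [norm_nonneg z, norm_nonneg a]
    have h2 := norm_sub_norm_le (1:ℂ) ((starRingEnd ℂ a) * z)
    simp only [norm_one] at h2
    linarith
  have hFle : ∀ z ∈ Metric.ball (0:ℂ) 1, ‖F z‖ ≤ c := by
    intro z hz
    rw [habs z]
    have hb := hablb z hz
    have hbpos : 0 < ‖1 - (starRingEnd ℂ a) * z‖ := lt_of_lt_of_le hr hb
    have hq : (1 - t^2) * (‖1 - (starRingEnd ℂ a) * z‖)⁻¹ ≤ 1 + t := by
      rw [mul_inv_le_iff₀ hbpos]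
      nlinarith
    have hq0 : 0 ≤ (1 - t^2) * (‖1 - (starRingEnd ℂ a) * z‖)⁻¹ := by positivity
    have h2 : ((1 - t^2) * (‖1 - (starRingEnd ℂ a) * z‖)⁻¹)^4 ≤ (1+t)^4 :=
      pow_le_pow_left₀ hq0 hq 4
    have h3 : (1+t:ℝ)^4 ≤ 16 := by nlinarith
    nlinarith
  -- the main integral bound
  have hint : (∫⁻ z, ENNReal.ofReal (Ψ (‖F z‖)) ∂bergmanMeasure) ≤ 1 := by
    rw [bergmanMeasure, lintegral_smul_measure]
    apply le_one_of_le_pi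
    -- pointwise bound by (Ψ c / c) * |F z|
    have step1 : ∫⁻ z in Metric.ball (0:ℂ) 1, ENNReal.ofReal (Ψ (‖F z‖))
        ≤ ENNReal.ofReal (Ψ c / c) * ∫⁻ z in Metric.ball (0:ℂ) 1,
            ENNReal.ofReal (‖F z‖) := by
      rw [← lintegral_const_mul' _ _ ENNReal.ofReal_ne_top]
      apply lintegral_mono_ae
      rw [ae_restrict_iff' Metric.isOpen_ball.measurableSet]
      filter_upwards with z hz
      rw [← ENNReal.ofReal_mul (by rw [hΨc]; positivity)]
      apply ENNReal.ofReal_le_ofReal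
      have hle := hFle z hz
      have h0 := norm_nonneg (F z)
      have hs := psi_sublinear hΨ0 hΨconv (‖F z‖ / c) c (by positivity)
        (by rw [div_le_one hcpos]; exact hle) hc0
      rw [div_mul_cancel₀ _ hcpos.ne'] at hs
      calc Ψ (‖F z‖) ≤ (‖F z‖ / c) * Ψ c := hs
        _ = Ψ c / c * ‖F z‖ := by ring
    -- pull out constants
    have step2 : ∫⁻ z in Metric.ball (0:ℂ) 1, ENNReal.ofReal (‖F z‖)
        = ENNReal.ofReal ((c/16) * (1 - t^2)^4) *
          ∫⁻ z in Metric.ball (0:ℂ) 1,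
            ENNReal.ofReal (((‖1 - (starRingEnd ℂ a) * z‖)^4)⁻¹) := by
      rw [← lintegral_const_mul' _ _ ENNReal.ofReal_ne_top]
      apply lintegral_congr
      intro z
      rw [← ENNReal.ofReal_mul (by positivity)]
      congr 1
      rw [habs z, mul_pow, inv_pow]
      ring
    set J : ℝ≥0∞ := ∫⁻ z in Metric.ball (0:ℂ) 1,
        ENNReal.ofReal (((‖1 - (starRingEnd ℂ a) * z‖)^4)⁻¹) with hJdef
    by_cases hcase : t ≤ 2/5
    · -- small t: crude bound
      have hJ : J ≤ ENNReal.ofReal (((1-t)^4)⁻¹) * ENNReal.ofReal π := by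
        have hmono : J ≤ ∫⁻ _z in Metric.ball (0:ℂ) 1,
            ENNReal.ofReal (((1-t)^4)⁻¹) := by
          rw [hJdef]
          apply lintegral_mono_ae
          rw [ae_restrict_iff' Metric.isOpen_ball.measurableSet]
          filter_upwards with z hz
          apply ENNReal.ofReal_le_ofReal
          have hb := hablb z hz
          have : (1-t)^4 ≤ (‖1 - (starRingEnd ℂ a) * z‖)^4 :=
            pow_le_pow_left₀ hr.le hb 4
          exact inv_anti₀ (by positivity) this
        calc J ≤ _ := hmono
          _ = ENNReal.ofReal (((1-t)^4)⁻¹) * volume (Metric.ball (0:ℂ) 1) :=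
            setLIntegral_const _ _
          _ = ENNReal.ofReal (((1-t)^4)⁻¹) * ENNReal.ofReal π := by
            rw [Complex.volume_ball]
            norm_num
            rw [← ENNReal.ofReal_coe_nnreal, NNReal.coe_real_pi]
      calc ∫⁻ z in Metric.ball (0:ℂ) 1, ENNReal.ofReal (Ψ (‖F z‖))
          ≤ ENNReal.ofReal (Ψ c / c) * (ENNReal.ofReal ((c/16) * (1 - t^2)^4) * J) := by
            rw [← step2]; exact step1
        _ ≤ ENNReal.ofReal (Ψ c / c) * (ENNReal.ofReal ((c/16) * (1 - t^2)^4) *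
              (ENNReal.ofReal (((1-t)^4)⁻¹) * ENNReal.ofReal π)) := by
            exact mul_le_mul_right (mul_le_mul_right hJ _) _
        _ = ENNReal.ofReal ((Ψ c / c) * ((c/16) * (1 - t^2)^4 * (((1-t)^4)⁻¹ * π))) := by
            rw [← ENNReal.ofReal_mul (by positivity), ← ENNReal.ofReal_mul (by positivity),
              ← ENNReal.ofReal_mul (by rw [hΨc]; positivity)]
        _ ≤ ENNReal.ofReal π := by
            apply ENNReal.ofReal_le_ofReal
            have hkey : (1+t)^4 ≤ 16 * (1-t)^2 := by nlinarith
            have hprod : Ψ c / c * ((c/16) * (1 - t^2)^4 * (((1-t)^4)⁻¹ * π))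
                = π * (1+t)^4 / (16*(1-t)^2) := by
              rw [hΨc]
              field_simp
              ring
            rw [hprod, div_le_iff₀ (by positivity)]
            nlinarith [mul_le_mul_of_nonneg_left hkey pi_pos.le]
    · -- large t
      push_neg at hcase
      have ht5 : (0:ℝ) < t := by linarith
      have ha0 : a ≠ 0 := by
        intro h; rw [h] at htdef; simp at htdef; rw [htdef] at ht5; linarith
      have hJ : J ≤ ENNReal.ofReal (2*π/(t*(1-t)*(1-t^2))) := by
        rw [hJdef, rot_int ha0, ← htdef]
        exact J_bound ht5 (by linarith)
      calc ∫⁻ z in Metric.ball (0:ℂ) 1, ENNReal.ofReal (Ψ (‖F z‖))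
          ≤ ENNReal.ofReal (Ψ c / c) * (ENNReal.ofReal ((c/16) * (1 - t^2)^4) * J) := by
            rw [← step2]; exact step1
        _ ≤ ENNReal.ofReal (Ψ c / c) * (ENNReal.ofReal ((c/16) * (1 - t^2)^4) *
              ENNReal.ofReal (2*π/(t*(1-t)*(1-t^2)))) := by
            exact mul_le_mul_right (mul_le_mul_right hJ _) _
        _ = ENNReal.ofReal ((Ψ c / c) * ((c/16) * (1 - t^2)^4 *
              (2*π/(t*(1-t)*(1-t^2))))) := by
            rw [← ENNReal.ofReal_mul (by positivity), ← ENNReal.ofReal_mul (by rw [hΨc]; positivity)]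
        _ ≤ ENNReal.ofReal π := by
            apply ENNReal.ofReal_le_ofReal
            have hkey : (1+t)^3 ≤ 8 * t := by
              nlinarith [mul_nonneg hr.le (by nlinarith : (0:ℝ) ≤ t^2 + 4*t - 1)]
            have hprod : Ψ c / c * ((c/16) * (1 - t^2)^4 * (2*π/(t*(1-t)*(1-t^2))))
                = π * (1+t)^3 / (8*t) := by
              rw [hΨc]
              have h1 : (1:ℝ) - t ≠ 0 := hr.ne'
              have h2 : (1:ℝ) - t^2 ≠ 0 := ht2.ne'
              have h3 : t ≠ 0 := ht5.ne'
              have h4 : c ≠ 0 := hcpos.ne'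
              field_simp
              ring
            rw [hprod, div_le_iff₀ (by positivity)]
            nlinarith [mul_le_mul_of_nonneg_left hkey pi_pos.le]
    -- close
  -- value at a
  have hFa : ‖F a‖ = c/16 := by
    have h1 : (starRingEnd ℂ a) * a = ((1 - (1 - t^2) : ℝ) : ℂ) := by
      rw [mul_comm, Complex.mul_conj, Complex.normSq_eq_norm_sq, ← htdef]
      push_cast; ring
    have h2 : (1 : ℂ) - (starRingEnd ℂ a) * a = ((1 - t^2 : ℝ) : ℂ) := by
      rw [h1]; push_cast; ring
    rw [hFdef]
    simp only [h2]
    rw [mul_inv_cancel₀ (Complex.ofReal_ne_zero.mpr ht2.ne')]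
    simp only [one_pow, mul_one, norm_mul, Complex.norm_real, Real.norm_eq_abs, norm_pow, norm_one]
    simp [abs_of_nonneg (by positivity : (0:ℝ) ≤ c/16)]
  refine ⟨F, hdiff, hint, ?_⟩
  rw [hFa, hcdef]
  ring

lemma le_pi_of_inv_mul_le {X : ℝ≥0∞} (h : (ENNReal.ofReal π)⁻¹ * X ≤ 1) :
    X ≤ ENNReal.ofReal π := by
  have h2 := mul_le_mul_right h (ENNReal.ofReal π)
  rwa [← mul_assoc, ENNReal.mul_inv_cancel ofReal_pi_ne_zero ENNReal.ofReal_ne_top,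
    one_mul, mul_one] at h2

theorem upper_bound
    (Ψ Ψinv : ℝ → ℝ)
    (hΨ0 : Ψ 0 = 0)
    (hΨmono : StrictMonoOn Ψ (Set.Ici 0))
    (hΨconv : StrictConvexOn ℝ (Set.Ici 0) Ψ)
    (hΨcont : ContinuousOn Ψ (Set.Ici 0))
    (hΨinv1 : ∀ x, 0 ≤ x → Ψinv (Ψ x) = x)
    (hΨinv2 : ∀ y, 0 ≤ y → Ψ (Ψinv y) = y)
    (hΨinv0 : ∀ y, 0 ≤ y → 0 ≤ Ψinv y)
    (a : ℂ) (ha : ‖a‖ < 1)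
    (f : ℂ → ℂ) (hf : DifferentiableOn ℂ f (Metric.ball 0 1))
    (hint : (∫⁻ z, ENNReal.ofReal (Ψ (‖f z‖)) ∂bergmanMeasure) ≤ 1) :
    ‖f a‖ ≤ 8 * Ψinv (1 / (1 - ‖a‖) ^ 2) := by
  have ht0 : 0 ≤ ‖a‖ := norm_nonneg a
  set t : ℝ := ‖a‖ with htdef
  have hr : 0 < 1 - t := by linarith
  set r : ℝ := 1 - t with hrdef
  set R0 : ℝ := r/2 with hR0def
  set R1 : ℝ := 3*r/4 with hR1def
  have hR0 : 0 < R0 := by rw [hR0def]; positivity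
  have hR01 : R0 < R1 := by rw [hR0def, hR1def]; linarith
  have hsub : Metric.closedBall a R1 ⊆ Metric.ball (0:ℂ) 1 := by
    intro z hz
    rw [Metric.mem_closedBall, Complex.dist_eq] at hz
    rw [Metric.mem_ball, Complex.dist_eq, sub_zero]
    calc ‖z‖ = ‖a + (z - a)‖ := by ring_nf
      _ ≤ ‖a‖ + ‖z - a‖ := norm_add_le _ _
      _ ≤ t + R1 := by rw [htdef]; exact add_le_add le_rfl hz
      _ < 1 := by rw [hR1def, hrdef]; linarith
  have hπ : ∫⁻ z in Metric.ball (0:ℂ) 1, ENNReal.ofReal (Ψ (‖f z‖))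
      ≤ ENNReal.ofReal π := by
    apply le_pi_of_inv_mul_le
    rw [bergmanMeasure, lintegral_smul_measure] at hint
    exact hint
  -- the function on the annulus centered at 0
  set φ : ℂ → ℝ := fun w => Ψ (‖f (a + w)‖) with hφdef
  set A : Set ℂ := (norm : ℂ → ℝ) ⁻¹' (Set.Ioo R0 R1) with hAdef
  have hAmeas : MeasurableSet A :=
    continuous_norm.measurable measurableSet_Ioo
  set Abar : Set ℂ := Metric.closedBall 0 R1 \ Metric.ball 0 R0 with hAbardef
  have hAsub : A ⊆ Abar := by
    intro w hw
    rw [hAdef, Set.mem_preimage, Set.mem_Ioo] at hw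
    constructor
    · rw [Metric.mem_closedBall, Complex.dist_eq, sub_zero]; exact hw.2.le
    · rw [Metric.mem_ball, Complex.dist_eq, sub_zero]; push_neg; exact hw.1.le
  have hAbarcomp : IsCompact Abar := (isCompact_closedBall 0 R1).diff Metric.isOpen_ball
  have hshift : ∀ w ∈ Metric.closedBall (0:ℂ) R1, a + w ∈ Metric.ball (0:ℂ) 1 := by
    intro w hw
    apply hsub
    rw [Metric.mem_closedBall, Complex.dist_eq] at hw ⊢
    simpa using hw
  have habscont : ContinuousOn (fun w => ‖f (a + w)‖) (Metric.closedBall 0 R1) := by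
    apply continuous_norm.comp_continuousOn
    exact hf.continuousOn.comp ((continuous_const.add continuous_id).continuousOn) hshift
  have hφcont : ContinuousOn φ (Metric.closedBall 0 R1) := by
    rw [hφdef]
    exact hΨcont.comp habscont (fun w _ => Set.mem_Ici.2 (norm_nonneg _))
  have hφnn : ∀ w, 0 ≤ φ w := fun w =>
    psi_nonneg hΨ0 hΨmono _ (norm_nonneg _)
  have hφint : IntegrableOn φ A volume :=
    ((hφcont.mono (Set.diff_subset (t := Metric.ball 0 R0))).integrableOn_compact
      hAbarcomp).mono_set hAsub
  -- Claim 1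
  have claim1 : ∫ w in A, φ w ≤ π := by
    set S : Set ℂ := (fun z => ‖z - a‖) ⁻¹' (Set.Ioo R0 R1) with hSdef
    have hSmeas : MeasurableSet S :=
      (continuous_norm.comp (continuous_id.sub continuous_const)).measurable
        measurableSet_Ioo
    have hSsub : S ⊆ Metric.ball (0:ℂ) 1 := by
      intro z hz
      rw [hSdef, Set.mem_preimage, Set.mem_Ioo] at hz
      apply hsub
      rw [Metric.mem_closedBall, Complex.dist_eq]
      exact hz.2.le
    have key : ENNReal.ofReal (∫ w in A, φ w)
        ≤ ENNReal.ofReal π := by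
      rw [ofReal_integral_eq_lintegral_ofReal hφint
        (Filter.Eventually.of_forall (fun w => hφnn w))]
      calc ∫⁻ w in A, ENNReal.ofReal (φ w)
          = ∫⁻ w, A.indicator (fun w => ENNReal.ofReal (φ w)) w := by
            rw [lintegral_indicator hAmeas]
        _ = ∫⁻ w, S.indicator (fun z => ENNReal.ofReal (Ψ (‖f z‖))) (a + w) := by
            apply lintegral_congr
            intro w
            have hmem : a + w ∈ S ↔ w ∈ A := by
              rw [hSdef, hAdef, Set.mem_preimage, Set.mem_preimage, add_sub_cancel_left]
            by_cases hw : w ∈ A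
            · rw [Set.indicator_of_mem hw, Set.indicator_of_mem (hmem.2 hw)]
            · rw [Set.indicator_of_notMem hw, Set.indicator_of_notMem (fun h => hw (hmem.1 h))]
        _ = ∫⁻ z, S.indicator (fun z => ENNReal.ofReal (Ψ (‖f z‖))) z :=
            lintegral_add_left_eq_self _ a
        _ = ∫⁻ z in S, ENNReal.ofReal (Ψ (‖f z‖)) := by
            rw [lintegral_indicator hSmeas]
        _ ≤ ∫⁻ z in Metric.ball (0:ℂ) 1, ENNReal.ofReal (Ψ (‖f z‖)) :=
            lintegral_mono_set hSsub
        _ ≤ ENNReal.ofReal π := hπ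
    exact (ENNReal.ofReal_le_ofReal_iff pi_pos.le).1 key
  -- Claim 2
  set Q : Set (ℝ × ℝ) := (Set.Ioo R0 R1) ×ˢ (Set.Ioo (-π) π) with hQdef
  set g : ℝ × ℝ → ℝ := fun p => p.1 * φ (Complex.polarCoord.symm p) with hgdef
  have hQmeas : MeasurableSet Q := measurableSet_Ioo.prod measurableSet_Ioo
  have hsymmcont : Continuous (fun p : ℝ × ℝ => Complex.polarCoord.symm p) := by
    simp only [Complex.polarCoord_symm_apply]
    fun_prop
  have hgQint : IntegrableOn g Q (volume.prod volume) := by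
    have hK : IsCompact ((Set.Icc R0 R1) ×ˢ (Set.Icc (-π) π)) :=
      isCompact_Icc.prod isCompact_Icc
    have hmaps : Set.MapsTo (fun p : ℝ × ℝ => Complex.polarCoord.symm p)
        ((Set.Icc R0 R1) ×ˢ (Set.Icc (-π) π)) (Metric.closedBall 0 R1) := by
      intro p hp
      rw [Metric.mem_closedBall, Complex.dist_eq, sub_zero, Complex.norm_polarCoord_symm]
      rw [abs_of_nonneg (le_trans hR0.le hp.1.1)]
      exact hp.1.2
    have hgcont : ContinuousOn g ((Set.Icc R0 R1) ×ˢ (Set.Icc (-π) π)) := by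
      rw [hgdef]
      exact (continuous_fst.continuousOn).mul
        (hφcont.comp hsymmcont.continuousOn hmaps)
    have h1 : IntegrableOn g ((Set.Icc R0 R1) ×ˢ (Set.Icc (-π) π)) (volume.prod volume) := by
      rw [← Measure.volume_eq_prod]
      exact hgcont.integrableOn_compact hK
    exact h1.mono_set (Set.prod_mono Set.Ioo_subset_Icc_self Set.Ioo_subset_Icc_self)
  have claim2 : ∫ w in A, φ w = ∫ ρ in Set.Ioo R0 R1,
      ρ * ∫ θ in Set.Ioo (-π) π, φ (Complex.polarCoord.symm (ρ, θ)) := by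
    have hpolar := Complex.integral_comp_polarCoord_symm (A.indicator φ)
    have hrhs : ∫ p : ℂ, A.indicator φ p = ∫ w in A, φ w := integral_indicator hAmeas
    have hlhs : ∫ p in polarCoord.target, p.1 • (A.indicator φ) (Complex.polarCoord.symm p)
        = ∫ p in Q, g p := by
      have hQtarget : Q ⊆ polarCoord.target := by
        rw [polarCoord_target, hQdef]
        apply Set.prod_mono_left
        intro x hx
        exact lt_trans hR0 hx.1
      have heq : ∀ p ∈ polarCoord.target,
          p.1 • (A.indicator φ) (Complex.polarCoord.symm p) = Q.indicator g p := by
        intro p hp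
        rw [polarCoord_target] at hp
        have hp1 : 0 < p.1 := hp.1
        have hmem : Complex.polarCoord.symm p ∈ A ↔ p ∈ Q := by
          rw [hAdef, Set.mem_preimage, Complex.norm_polarCoord_symm, abs_of_pos hp1, hQdef,
            Set.mem_prod]
          constructor
          · intro h; exact ⟨h, hp.2⟩
          · intro h; exact h.1
        by_cases hpQ : p ∈ Q
        · rw [Set.indicator_of_mem hpQ, Set.indicator_of_mem (hmem.2 hpQ), hgdef, smul_eq_mul]
        · rw [Set.indicator_of_notMem hpQ,
            Set.indicator_of_notMem (fun h => hpQ (hmem.1 h)), smul_zero]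
      rw [setIntegral_congr_fun (by rw [polarCoord_target]; exact measurableSet_Ioi.prod measurableSet_Ioo) heq,
        setIntegral_indicator hQmeas, Set.inter_eq_right.2 hQtarget]
    rw [← hrhs, ← hpolar, hlhs, hQdef]
    have hsp := setIntegral_prod g hgQint
    rw [← Measure.volume_eq_prod] at hsp
    rw [hsp]
    apply setIntegral_congr_fun measurableSet_Ioo
    intro ρ hρ
    simp only [hgdef]
    rw [integral_const_mul]
  -- Claim 3
  have claim3 : ∃ ρ ∈ Set.Ioo R0 R1,
      (∫ θ in Set.Ioo (-π) π, φ (Complex.polarCoord.symm (ρ, θ))) ≤ 9*π/r^2 := by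
    by_contra hno
    push_neg at hno
    set H : ℝ → ℝ := fun ρ => ∫ θ in Set.Ioo (-π) π, φ (Complex.polarCoord.symm (ρ, θ))
      with hHdef
    have hHint : IntegrableOn (fun ρ => ρ * H ρ) (Set.Ioo R0 R1) volume := by
      have h1 : Integrable g ((volume.restrict (Set.Ioo R0 R1)).prod
          (volume.restrict (Set.Ioo (-π) π))) := by
        rw [Measure.prod_restrict]
        exact hgQint
      have h2 := h1.integral_prod_left
      apply h2.congr
      filter_upwards with ρ
      rw [hHdef, hgdef]
      simp only
      rw [integral_const_mul]
    have hptwise : ∀ ρ ∈ Set.Ioo R0 R1, R0 * (9*π/r^2) ≤ ρ * H ρ := by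
      intro ρ hρ
      have h9 : 0 < 9*π/r^2 := by positivity
      apply mul_le_mul hρ.1.le (hno ρ hρ).le h9.le
      linarith [hρ.1, hR0]
    have hmono := setIntegral_mono_on (integrableOn_const measure_Ioo_lt_top.ne)
      hHint measurableSet_Ioo hptwise
    rw [setIntegral_const] at hmono
    rw [measureReal_def, Real.volume_Ioo] at hmono
    have hvol : (ENNReal.ofReal (R1 - R0)).toReal = r/4 := by
      rw [ENNReal.toReal_ofReal (by linarith [hR01] : (0:ℝ) ≤ R1 - R0), hR1def, hR0def]
      ring
    rw [hvol, smul_eq_mul] at hmono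
    have hle : r/4 * (R0 * (9*π/r^2)) = 9*π/8 := by
      rw [hR0def]
      field_simp
      ring
    rw [hle] at hmono
    have : ∫ ρ in Set.Ioo R0 R1, ρ * H ρ ≤ π := by
      rw [hHdef, ← claim2]; exact claim1
    nlinarith [pi_pos]
  obtain ⟨ρ, hρmem, hHρ⟩ := claim3
  have hρpos : 0 < ρ := hR0.trans hρmem.1
  have hρball : Metric.closedBall a ρ ⊆ Metric.ball (0:ℂ) 1 :=
    (Metric.closedBall_subset_closedBall hρmem.2.le).trans hsub
  -- continuity along the circle
  have hcm : Continuous (fun θ : ℝ => f (circleMap a ρ θ)) := by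
    rw [continuous_iff_continuousAt]
    intro θ
    have hmem : circleMap a ρ θ ∈ Metric.ball (0:ℂ) 1 :=
      hρball (circleMap_mem_closedBall a hρpos.le θ)
    exact (hf.continuousOn.continuousAt (Metric.isOpen_ball.mem_nhds hmem)).comp
      (continuous_circleMap a ρ).continuousAt
  have hgc : Continuous (fun θ : ℝ => ‖f (circleMap a ρ θ)‖) :=
    continuous_norm.comp hcm
  -- Cauchy formula
  have hd : ∀ z ∈ Metric.ball a ρ \ (∅ : Set ℂ), DifferentiableAt ℂ f z := by
    intro z hz
    exact hf.differentiableAt (Metric.isOpen_ball.mem_nhds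
      (hρball (Metric.ball_subset_closedBall hz.1)))
  have hCauchy := Complex.circleIntegral_sub_center_inv_smul_of_differentiable_on_off_countable
    hρpos Set.countable_empty (hf.continuousOn.mono hρball) hd
  have hunfold : (∮ z in C(a, ρ), (z - a)⁻¹ • f z)
      = Complex.I * ∫ θ in (0:ℝ)..2*π, f (circleMap a ρ θ) := by
    rw [circleIntegral]
    rw [← intervalIntegral.integral_const_mul]
    apply intervalIntegral.integral_congr
    intro θ _
    have hne : circleMap 0 ρ θ ≠ 0 := by
      intro h
      have := norm_circleMap_zero ρ θ
      rw [h] at this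
      simp only [norm_zero] at this
      rw [abs_of_pos hρpos] at this
      linarith
    simp only [deriv_circleMap, circleMap_sub_center, smul_eq_mul]
    calc circleMap 0 ρ θ * Complex.I * ((circleMap 0 ρ θ)⁻¹ * f (circleMap a ρ θ))
        = (circleMap 0 ρ θ * (circleMap 0 ρ θ)⁻¹) * (Complex.I * f (circleMap a ρ θ)) := by
          ring
      _ = Complex.I * f (circleMap a ρ θ) := by rw [mul_inv_cancel₀ hne, one_mul]
  have hX : ∫ θ in (0:ℝ)..2*π, f (circleMap a ρ θ) = ((2*π:ℝ):ℂ) * f a := by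
    apply mul_left_cancel₀ Complex.I_ne_zero
    rw [← hunfold, hCauchy, smul_eq_mul]
    push_cast
    ring
  have habsX : 2*π*‖f a‖
      = ‖∫ θ in (0:ℝ)..2*π, f (circleMap a ρ θ)‖ := by
    rw [hX, norm_mul, Complex.norm_real, Real.norm_eq_abs, abs_of_pos (by positivity : (0:ℝ) < 2*π)]
  have hbound : ‖∫ θ in (0:ℝ)..2*π, f (circleMap a ρ θ)‖
      ≤ ∫ θ in (0:ℝ)..2*π, ‖f (circleMap a ρ θ)‖ := by
    have := intervalIntegral.norm_integral_le_integral_norm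
      (f := fun θ => f (circleMap a ρ θ)) (μ := volume) (by positivity : (0:ℝ) ≤ 2*π)
    simpa using this
  -- shift the integration interval
  have hper : Function.Periodic (fun θ : ℝ => ‖f (circleMap a ρ θ)‖) (2*π) :=
    (periodic_circleMap a ρ).comp (fun z => ‖f z‖)
  have hshift2 : ∫ θ in (0:ℝ)..2*π, ‖f (circleMap a ρ θ)‖
      = ∫ θ in Set.Ioo (-π) π, ‖f (circleMap a ρ θ)‖ := by
    have h1 := hper.intervalIntegral_add_eq 0 (-π)
    rw [zero_add] at h1
    have h2 : -π + 2*π = π := by ring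
    rw [h2] at h1
    rw [h1, intervalIntegral.integral_of_le (by linarith [pi_pos] : -π ≤ π),
      integral_Ioc_eq_integral_Ioo]
  -- Jensen's inequality
  set μ : Measure ℝ := volume.restrict (Set.Ioo (-π) π) with hμdef
  haveI hμfin : IsFiniteMeasure μ := ⟨by
    rw [hμdef, Measure.restrict_apply_univ]; exact measure_Ioo_lt_top⟩
  haveI hμne : NeZero μ := ⟨by
    rw [hμdef, Ne, Measure.restrict_eq_zero, Real.volume_Ioo, ENNReal.ofReal_eq_zero, not_le]
    linarith [pi_pos]⟩
  have hgint : Integrable (fun θ : ℝ => ‖f (circleMap a ρ θ)‖) μ :=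
    (hgc.integrableOn_Icc).mono_set Set.Ioo_subset_Icc_self
  have hΨgcont : Continuous (fun θ : ℝ => Ψ (‖f (circleMap a ρ θ)‖)) := by
    have hΨR : Continuous ((Set.Ici (0:ℝ)).restrict Ψ) :=
      continuousOn_iff_continuous_restrict.1 hΨcont
    exact hΨR.comp (Continuous.subtype_mk hgc (fun θ => norm_nonneg _))
  have hΨgint : Integrable (Ψ ∘ (fun θ : ℝ => ‖f (circleMap a ρ θ)‖)) μ :=
    (hΨgcont.integrableOn_Icc).mono_set Set.Ioo_subset_Icc_self
  have hjensen := hΨconv.convexOn.map_average_le hΨcont isClosed_Ici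
    (Filter.Eventually.of_forall (fun θ => Set.mem_Ici.2 (norm_nonneg _)))
    hgint hΨgint
  -- compute the averages
  have htoReal : (μ Set.univ).toReal = 2*π := by
    rw [hμdef, Measure.restrict_apply_univ, Real.volume_Ioo,
      ENNReal.toReal_ofReal (by linarith [pi_pos] : (0:ℝ) ≤ π - -π)]
    ring
  have havg1 : ⨍ θ, ‖f (circleMap a ρ θ)‖ ∂μ
      = (2*π)⁻¹ * ∫ θ in Set.Ioo (-π) π, ‖f (circleMap a ρ θ)‖ := by
    rw [average_eq, measureReal_def, htoReal, smul_eq_mul]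
  have havg2 : ⨍ θ, Ψ (‖f (circleMap a ρ θ)‖) ∂μ
      = (2*π)⁻¹ * ∫ θ in Set.Ioo (-π) π, Ψ (‖f (circleMap a ρ θ)‖) := by
    rw [average_eq, measureReal_def, htoReal, smul_eq_mul]
  -- |f a| is at most the average
  have hA1 : ‖f a‖ ≤ ⨍ θ, ‖f (circleMap a ρ θ)‖ ∂μ := by
    rw [havg1]
    rw [hshift2] at hbound
    have h2π : (0:ℝ) < 2*π := by positivity
    have : (2*π)⁻¹ * (2*π*‖f a‖)
        ≤ (2*π)⁻¹ * ∫ θ in Set.Ioo (-π) π, ‖f (circleMap a ρ θ)‖ := by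
      apply mul_le_mul_of_nonneg_left _ (by positivity)
      rw [habsX]; exact hbound
    rw [inv_mul_cancel_left₀ h2π.ne'] at this
    exact this
  have havgnn : 0 ≤ ⨍ θ, ‖f (circleMap a ρ θ)‖ ∂μ := by
    rw [havg1]
    apply mul_nonneg (by positivity)
    apply setIntegral_nonneg measurableSet_Ioo
    intro θ _
    exact norm_nonneg _
  -- relate H ρ to the circle integral of Ψ∘|f|
  have hsymmcirc : ∀ θ : ℝ, a + Complex.polarCoord.symm (ρ, θ) = circleMap a ρ θ := by
    intro θ
    rw [Complex.polarCoord_symm_apply, circleMap, Complex.exp_mul_I]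
    push_cast [Complex.ofReal_cos, Complex.ofReal_sin]
    ring
  have hHeq : ∫ θ in Set.Ioo (-π) π, Ψ (‖f (circleMap a ρ θ)‖)
      = ∫ θ in Set.Ioo (-π) π, φ (Complex.polarCoord.symm (ρ, θ)) := by
    apply setIntegral_congr_fun measurableSet_Ioo
    intro θ _
    rw [hφdef]
    simp only
    rw [hsymmcirc θ]
  -- conclude the Ψ-bound
  have hΨfa : Ψ (‖f a‖) ≤ (9/2) * (1/r^2) := by
    have hm := hΨmono.monotoneOn (Set.mem_Ici.2 (norm_nonneg (f a)))
      (Set.mem_Ici.2 havgnn) hA1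
    have hchain : Ψ (⨍ θ, ‖f (circleMap a ρ θ)‖ ∂μ)
        ≤ (2*π)⁻¹ * (9*π/r^2) := by
      calc Ψ (⨍ θ, ‖f (circleMap a ρ θ)‖ ∂μ)
          ≤ ⨍ θ, Ψ (‖f (circleMap a ρ θ)‖) ∂μ := hjensen
        _ = (2*π)⁻¹ * ∫ θ in Set.Ioo (-π) π, Ψ (‖f (circleMap a ρ θ)‖) := havg2
        _ ≤ (2*π)⁻¹ * (9*π/r^2) := by
            apply mul_le_mul_of_nonneg_left _ (by positivity)
            rw [hHeq]
            exact hHρ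
    have heval : (2*π)⁻¹ * (9*π/r^2) = (9/2) * (1/r^2) := by
      field_simp
    calc Ψ (‖f a‖) ≤ Ψ (⨍ θ, ‖f (circleMap a ρ θ)‖ ∂μ) := hm
      _ ≤ (2*π)⁻¹ * (9*π/r^2) := hchain
      _ = (9/2) * (1/r^2) := heval
  -- final chain
  have hfa0 : 0 ≤ ‖f a‖ := norm_nonneg _
  have hr2 : (0:ℝ) ≤ 1/r^2 := by positivity
  calc ‖f a‖ = Ψinv (Ψ (‖f a‖)) := (hΨinv1 _ hfa0).symm
    _ ≤ Ψinv ((9/2) * (1/r^2)) := psiinv_mono hΨmono hΨinv2 hΨinv0 _ _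
        (psi_nonneg hΨ0 hΨmono _ hfa0) hΨfa
    _ ≤ (9/2) * Ψinv (1/r^2) := psiinv_scale hΨ0 hΨmono hΨconv hΨinv1 hΨinv2 hΨinv0
        (9/2) (1/r^2) (by norm_num) hr2
    _ ≤ 8 * Ψinv (1/r^2) := by nlinarith [hΨinv0 (1/r^2) hr2]

theorem stmt_18
    (Ψ Ψinv : ℝ → ℝ)
    (hΨ0 : Ψ 0 = 0)
    (hΨmono : StrictMonoOn Ψ (Set.Ici 0))
    (hΨconv : StrictConvexOn ℝ (Set.Ici 0) Ψ)
    (hΨcont : ContinuousOn Ψ (Set.Ici 0))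
    (hΨlim : Filter.Tendsto (fun x => Ψ x / x) Filter.atTop Filter.atTop)
    (hΨinv1 : ∀ x, 0 ≤ x → Ψinv (Ψ x) = x)
    (hΨinv2 : ∀ y, 0 ≤ y → Ψ (Ψinv y) = y)
    (hΨinv0 : ∀ y, 0 ≤ y → 0 ≤ Ψinv y)
    (a : ℂ) (ha : ‖a‖ < 1) :
    (1 / 16) * Ψinv (1 / (1 - ‖a‖) ^ 2) ≤ bergmanEvalNorm Ψ a ∧
    bergmanEvalNorm Ψ a ≤ 8 * Ψinv (1 / (1 - ‖a‖) ^ 2) := by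
  set S : Set ℝ := {x : ℝ | ∃ f : ℂ → ℂ, DifferentiableOn ℂ f (Metric.ball 0 1) ∧
    (∫⁻ z, ENNReal.ofReal (Ψ (‖f z‖)) ∂bergmanMeasure) ≤ 1 ∧
    x = ‖f a‖} with hSdef
  have hub : ∀ x ∈ S, x ≤ 8 * Ψinv (1 / (1 - ‖a‖) ^ 2) := by
    rintro x ⟨f, hf, hi, rfl⟩
    exact upper_bound Ψ Ψinv hΨ0 hΨmono hΨconv hΨcont hΨinv1 hΨinv2 hΨinv0 a ha f hf hi
  have hbdd : BddAbove S := ⟨8 * Ψinv (1 / (1 - ‖a‖) ^ 2), hub⟩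
  have hne : S.Nonempty := by
    refine ⟨0, fun _ => 0, ?_, ?_, ?_⟩
    · exact differentiableOn_const 0
    · simp [hΨ0]
    · simp
  constructor
  · obtain ⟨F, h1, h2, h3⟩ := lower_witness Ψ Ψinv hΨ0 hΨmono hΨconv hΨinv2 hΨinv0 a ha
    have hmem : (1 / 16) * Ψinv (1 / (1 - ‖a‖) ^ 2) ∈ S := ⟨F, h1, h2, h3⟩
    exact le_csSup hbdd hmem
  · exact csSup_le hne hub
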